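/- Let 0 < α < β be constants, and let H be drawn from the random MDPC distribution D_{r,n,v,w} with α√n ≤ v < w ≤ β√n. Then for any ε > 0, the probability that the maximum column intersection of H exceeds (2+ε)·(ln n)/(ln ln n) tends to 0 as n → ∞. -/

import Mathlib

open Finset
open scoped Classical
open Filter

lemma fact_ge (m : ℕ) : ((m:ℝ)/3)^m ≤ (m.factorial : ℝ) := by
  have h1 : ((m:ℝ))^m / m.factorial ≤ Real.exp m :=
    Real.pow_div_factorial_le_exp (m:ℝ) (by positivity) m
  have h2 : Real.exp (m:ℝ) ≤ 3 ^ m := by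
    rw [← Real.exp_one_rpow (m:ℝ)]
    calc Real.exp 1 ^ (m:ℝ) = (Real.exp 1)^m := by
            rw [Real.rpow_natCast]
      _ ≤ 3^m := pow_le_pow_left₀ (Real.exp_pos 1).le
            (by linarith [Real.exp_one_lt_d9]) m
  have hf : (0:ℝ) < m.factorial := by positivity
  rw [div_pow, div_le_iff₀ (by positivity)]
  have h3 := (div_le_iff₀ hf).mp h1
  calc (m:ℝ)^m ≤ Real.exp m * m.factorial := h3
    _ ≤ m.factorial * 3^m := by nlinarith

lemma log_small {η : ℝ} (hη : 0 < η) :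
    ∀ᶠ y : ℝ in atTop, Real.log y ≤ η * y := by
  filter_upwards [eventually_ge_atTop (1:ℝ), eventually_ge_atTop ((2/η)^2)] with y h1 h2
  have hy : (0:ℝ) < y := by linarith
  have hsq : Real.log y = 2 * Real.log (Real.sqrt y) := by
    rw [Real.log_sqrt hy.le]; ring
  have h3 : Real.log (Real.sqrt y) ≤ Real.sqrt y := by
    have := Real.log_le_sub_one_of_pos (Real.sqrt_pos.mpr hy)
    linarith
  have h4 : (2/η) ≤ Real.sqrt y := by
    rcases le_or_gt (2/η) 0 with h | h
    · exact h.trans (Real.sqrt_nonneg y)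
    · exact (Real.le_sqrt' h).mpr h2
  have h6 : 2 ≤ η * Real.sqrt y := by
    rw [div_le_iff₀ hη] at h4; linarith
  have hy' : Real.sqrt y * Real.sqrt y = y := Real.mul_self_sqrt hy.le
  nlinarith [Real.sqrt_nonneg y]

lemma key_asymp (B ε δ : ℝ) (hB : 0 < B) (hε : 0 < ε) (hδ : 0 < δ) :
    ∀ᶠ n : ℕ in atTop, ∀ m : ℕ,
      (2+ε) * Real.log n / Real.log (Real.log n) ≤ m →
      (n:ℝ)^2 * (B / m)^m < δ := by
  set η : ℝ := (ε/2)/(2+ε) with hηdef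
  have hη : 0 < η := by positivity
  have hη1 : η < 1 := by
    rw [hηdef, div_lt_one (by linarith)]; linarith
  set C : ℝ := Real.log B with hCdef
  have T0 : Tendsto (fun n : ℕ => (n:ℝ)) atTop atTop := tendsto_natCast_atTop_atTop
  have T1 : Tendsto (fun n : ℕ => Real.log n) atTop atTop :=
    Real.tendsto_log_atTop.comp T0
  have T2 : Tendsto (fun n : ℕ => Real.log (Real.log n)) atTop atTop :=
    Real.tendsto_log_atTop.comp T1
  filter_upwards [T2.eventually_ge_atTop 1,
    T2.eventually (log_small (show 0 < η/2 by positivity)),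
    T2.eventually_ge_atTop ((2/η) * (C - Real.log (2+ε))),
    T1.eventually_gt_atTop ((2/ε) * (1 - Real.log δ)),
    T0.eventually_gt_atTop 0] with n hLL hLLL hC2 hLn hn0
  intro m hm
  set L : ℝ := Real.log n with hLdef
  set LL : ℝ := Real.log L with hLLdef
  have hL0 : (0:ℝ) ≤ L := Real.log_natCast_nonneg n
  have hL1 : 0 < L := by
    rcases hL0.eq_or_lt with h | h
    · exfalso; rw [hLLdef, ← h, Real.log_zero] at hLL; linarith
    · exact h
  have hLLpos : (0:ℝ) < LL := by linarith
  set g : ℝ := (2+ε) * L / LL with hgdef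
  have hgpos : 0 < g := by positivity
  have hm' : g ≤ (m:ℝ) := hm
  have hm1 : 0 < m := by
    by_contra h
    push_neg at h
    interval_cases m
    · simp at hm'; linarith
  have hmR : (0:ℝ) < m := by exact_mod_cast hm1
  have hlogg : Real.log g = Real.log (2+ε) + LL - Real.log LL := by
    rw [hgdef, Real.log_div (by positivity) (ne_of_gt hLLpos),
      Real.log_mul (by linarith) (ne_of_gt hL1)]
  have hC2' : C - Real.log (2+ε) ≤ (η/2) * LL := by
    have h3 : η * (2/η * (C - Real.log (2+ε))) = 2 * (C - Real.log (2+ε)) := by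
      field_simp
    have h4 := mul_le_mul_of_nonneg_left hC2 (le_of_lt hη)
    rw [h3] at h4
    linarith
  have hlower : (1-η) * LL ≤ Real.log g - C := by
    rw [hlogg]; linarith
  have h0 : 0 ≤ Real.log g - C := by nlinarith
  have hlogm : Real.log g ≤ Real.log (m:ℝ) := Real.log_le_log hgpos hm'
  have hmono : g * (Real.log g - C) ≤ (m:ℝ) * (Real.log (m:ℝ) - C) :=
    mul_le_mul hm' (by linarith) h0 (by positivity)
  have hcoeff : (2+ε) * (1-η) = 2 + ε/2 := by
    rw [hηdef]; field_simp; ring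
  have hglower : (2+ε/2) * L ≤ g * (Real.log g - C) := by
    have h1 : g * ((1-η) * LL) ≤ g * (Real.log g - C) :=
      mul_le_mul_of_nonneg_left hlower hgpos.le
    have h2 : g * ((1-η) * LL) = (2+ε/2) * L := by
      rw [hgdef]
      rw [div_mul_eq_mul_div, div_eq_iff hLLpos.ne', ← hcoeff]; ring
    linarith
  have hfin : 2 * L + (m:ℝ) * (C - Real.log (m:ℝ)) < Real.log δ := by
    have h1 : (2+ε/2) * L ≤ (m:ℝ) * (Real.log (m:ℝ) - C) := le_trans hglower hmono
    have h2 : (ε/2) * L > 1 - Real.log δ := by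
      have h5 : (ε/2) * (2/ε * (1 - Real.log δ)) = 1 - Real.log δ := by
        field_simp
      have h6 := mul_lt_mul_of_pos_left hLn (show (0:ℝ) < ε/2 by linarith)
      rw [h5] at h6
      linarith
    nlinarith
  calc (n:ℝ)^2 * (B / m)^m
      = Real.exp (2 * L + (m:ℝ) * (C - Real.log (m:ℝ))) := by
        rw [Real.exp_add]
        congr 1
        · rw [← Real.exp_log (pow_pos hn0 2), Real.log_pow]
          norm_num
          exact hLdef.symm
        · rw [← Real.exp_log (show (0:ℝ) < B / m from div_pos hB hmR),
            Real.log_div (ne_of_gt hB) (ne_of_gt hmR), ← Real.exp_nat_mul]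
    _ < Real.exp (Real.log δ) := Real.exp_lt_exp.mpr hfin
    _ = δ := Real.exp_log hδ

lemma fiber_card_eq {n : ℕ} (j j' : Fin n) {a b c d : Fin n}
    (hab : a ≠ b) (hcd : c ≠ d) :
    (univ.filter (fun π : Equiv.Perm (Fin n) => π j = a ∧ π j' = b)).card =
    (univ.filter (fun π : Equiv.Perm (Fin n) => π j = c ∧ π j' = d)).card := by
  set ρ : Equiv.Perm (Fin n) := (Equiv.swap (Equiv.swap a c b) d) * (Equiv.swap a c) with hρ
  have hb' : Equiv.swap a c b ≠ c := by
    intro h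
    apply hab
    have := congrArg (Equiv.swap a c) h
    rw [Equiv.swap_apply_self, Equiv.swap_apply_right] at this
    exact this.symm
  have hρa : ρ a = c := by
    simp only [hρ, Equiv.Perm.mul_apply, Equiv.swap_apply_left]
    exact Equiv.swap_apply_of_ne_of_ne (Ne.symm hb') hcd
  have hρb : ρ b = d := by
    simp only [hρ, Equiv.Perm.mul_apply]
    rw [show Equiv.swap a c b = Equiv.swap a c b from rfl, Equiv.swap_apply_left]
  apply Finset.card_bij' (fun π _ => ρ * π) (fun π _ => ρ⁻¹ * π)
  · intro π hπ
    simp only [mem_filter, mem_univ, true_and] at hπ ⊢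
    simp [Equiv.Perm.mul_apply, hπ.1, hπ.2, hρa, hρb]
  · intro π hπ
    simp only [mem_filter, mem_univ, true_and] at hπ ⊢
    constructor
    · have : ρ⁻¹ c = a := by rw [← hρa, Equiv.Perm.inv_def, Equiv.symm_apply_apply]
      simp [Equiv.Perm.mul_apply, hπ.1, this]
    · have : ρ⁻¹ d = b := by rw [← hρb, Equiv.Perm.inv_def, Equiv.symm_apply_apply]
      simp [Equiv.Perm.mul_apply, hπ.2, this]
  · intro π _; simp [mul_assoc]
  · intro π _; simp [mul_assoc]

lemma block_pairs_card {n w : ℕ} (hw : 0 < w) :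
    ((univ : Finset (Fin n)).offDiag.filter
      (fun p => ((p.1 : ℕ)) / w = ((p.2 : ℕ)) / w)).card ≤ n * (w - 1) := by
  set S := ((univ : Finset (Fin n)).offDiag.filter
      (fun p => ((p.1 : ℕ)) / w = ((p.2 : ℕ)) / w)) with hS
  have hmem : ∀ p : Fin n × Fin n, p ∈ S ↔
      (p.1 ≠ p.2 ∧ ((p.1 : ℕ)) / w = ((p.2 : ℕ)) / w) := by
    intro p
    rw [hS, mem_filter, mem_offDiag]
    simp only [mem_univ, true_and]
  have h1 : S.card = ∑ a : Fin n, (S.filter (fun p => p.1 = a)).card :=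
    Finset.card_eq_sum_card_fiberwise (fun p _ => mem_univ _)
  have h2 : ∀ a : Fin n, (S.filter (fun p => p.1 = a)).card ≤ w - 1 := by
    intro a
    have hle : (S.filter (fun p => p.1 = a)).card ≤ ((range w).erase ((a : ℕ) % w)).card := by
      apply Finset.card_le_card_of_injOn (fun p => (p.2 : ℕ) % w)
      · intro p hp
        rw [Finset.mem_coe, mem_filter] at hp
        obtain ⟨hpS, hpa⟩ := hp
        rw [hmem] at hpS
        obtain ⟨hne, hdiv⟩ := hpS
        rw [Finset.mem_coe, mem_erase, mem_range]
        refine ⟨?_, Nat.mod_lt _ hw⟩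
        intro h
        apply hne
        rw [hpa]
        apply Fin.ext
        rw [hpa] at hdiv
        conv_lhs => rw [← Nat.div_add_mod ((a:ℕ)) w]
        conv_rhs => rw [← Nat.div_add_mod ((p.2:ℕ)) w]
        rw [hdiv, show ((p.2:ℕ)) % w = ((a:ℕ)) % w from h]
      · intro p hp q hq hpq
        dsimp only at hpq
        rw [Finset.mem_coe, mem_filter] at hp hq
        obtain ⟨hpS, hpa⟩ := hp
        obtain ⟨hqS, hqa⟩ := hq
        rw [hmem] at hpS hqS
        have hdp := hpS.2
        have hdq := hqS.2
        rw [hpa] at hdp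
        rw [hqa] at hdq
        have hpq' : ((p.2 : ℕ)) % w = ((q.2 : ℕ)) % w := hpq
        have hval : (p.2 : ℕ) = (q.2 : ℕ) := by
          conv_lhs => rw [← Nat.div_add_mod ((p.2:ℕ)) w]
          conv_rhs => rw [← Nat.div_add_mod ((q.2:ℕ)) w]
          rw [← hdp, hdq, hpq']
        exact Prod.ext (hpa.trans hqa.symm) (Fin.ext hval)
    have : ((range w).erase ((a : ℕ) % w)).card = w - 1 := by
      rw [Finset.card_erase_of_mem (mem_range.mpr (Nat.mod_lt _ hw)), card_range]
    omega
  rw [h1]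
  calc ∑ a : Fin n, (S.filter (fun p => p.1 = a)).card
      ≤ ∑ _a : Fin n, (w-1) := Finset.sum_le_sum (fun a _ => h2 a)
    _ = n * (w-1) := by simp [mul_comm]

lemma perm_pair_count {n w : ℕ} (hw : 0 < w) (j j' : Fin n) (hjj : j ≠ j') :
    (univ.filter (fun π : Equiv.Perm (Fin n) =>
        ((π j : ℕ))/w = ((π j' : ℕ))/w)).card * (n*n - n)
      ≤ (n * (w-1)) * n.factorial := by
  classical
  set A := (univ.filter (fun π : Equiv.Perm (Fin n) =>
      ((π j : ℕ))/w = ((π j' : ℕ))/w)) with hAdef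
  set k := (univ.filter (fun π : Equiv.Perm (Fin n) => π j = j ∧ π j' = j')).card with hk
  set S := ((univ : Finset (Fin n)).offDiag.filter
      (fun p => ((p.1:ℕ))/w = ((p.2:ℕ))/w)) with hSdef
  have hfib : ∀ p : Fin n × Fin n, p.1 ≠ p.2 →
      (univ.filter (fun π : Equiv.Perm (Fin n) => (π j, π j') = p)).card = k := by
    intro p hp
    rw [hk]
    have heq : (univ.filter (fun π : Equiv.Perm (Fin n) => (π j, π j') = p))
        = (univ.filter (fun π : Equiv.Perm (Fin n) => π j = p.1 ∧ π j' = p.2)) := by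
      apply filter_congr
      intro π _
      simp [Prod.ext_iff]
    rw [heq]
    exact fiber_card_eq j j' hp hjj
  have htotal : Fintype.card (Equiv.Perm (Fin n))
      = ((univ : Finset (Fin n)).offDiag).card * k := by
    rw [← Finset.card_univ]
    rw [Finset.card_eq_sum_card_fiberwise
        (f := fun π : Equiv.Perm (Fin n) => (π j, π j'))
        (t := (univ : Finset (Fin n)).offDiag) (fun π _ => by
          rw [Finset.mem_coe, mem_offDiag]
          exact ⟨mem_univ _, mem_univ _, (Equiv.injective _).ne hjj⟩)]
    rw [Finset.sum_congr rfl (fun p hp => hfib p (mem_offDiag.mp hp).2.2)]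
    rw [sum_const, smul_eq_mul]
  have hAcard : A.card = S.card * k := by
    rw [Finset.card_eq_sum_card_fiberwise
        (f := fun π : Equiv.Perm (Fin n) => (π j, π j')) (t := S)
        (fun π hπ => by
          rw [hAdef, Finset.mem_coe, mem_filter] at hπ
          rw [hSdef, Finset.mem_coe, mem_filter, mem_offDiag]
          exact ⟨⟨mem_univ _, mem_univ _, (Equiv.injective _).ne hjj⟩, hπ.2⟩)]
    rw [Finset.sum_congr rfl (fun p hp => ?_), sum_const, smul_eq_mul]
    have hp' := hp
    rw [hSdef, mem_filter, mem_offDiag] at hp'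
    obtain ⟨⟨-, -, hne⟩, hdiv⟩ := hp'
    have heq2 : A.filter (fun π => (π j, π j') = p)
        = univ.filter (fun π : Equiv.Perm (Fin n) => (π j, π j') = p) := by
      ext π
      simp only [hAdef, mem_filter, filter_filter, mem_univ, true_and]
      constructor
      · exact fun h => h.2
      · intro h
        refine ⟨?_, h⟩
        have h1 : π j = p.1 := by rw [← h]
        have h2 : π j' = p.2 := by rw [← h]
        rw [h1, h2]
        exact hdiv
    rw [heq2, hfib p hne]
  have hS : S.card ≤ n * (w-1) := block_pairs_card hw
  have hoff : ((univ : Finset (Fin n)).offDiag).card = n*n - n := by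
    rw [Finset.offDiag_card, card_univ, Fintype.card_fin]
  calc A.card * (n*n - n) = S.card * k * (n*n - n) := by rw [hAcard]
    _ ≤ (n*(w-1)) * k * (n*n-n) :=
        Nat.mul_le_mul_right _ (Nat.mul_le_mul_right _ hS)
    _ = (n*(w-1)) * ((n*n-n) * k) := by ring
    _ = (n*(w-1)) * n.factorial := by
        rw [← hoff, ← htotal, Fintype.card_perm, Fintype.card_fin]

lemma prod_count {v : ℕ} {Ω : Type*} [Fintype Ω] [DecidableEq Ω]
    (P : Ω → Prop) [DecidablePred P] (m : ℕ) :
    ((univ : Finset (Fin v → Ω)).filter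
        (fun σ => m ≤ (univ.filter (fun ℓ => P (σ ℓ))).card)).card
      ≤ v.choose m * (univ.filter P).card ^ m * (Fintype.card Ω) ^ (v - m) := by
  classical
  set A := (univ.filter P) with hA
  have hsub : ((univ : Finset (Fin v → Ω)).filter
        (fun σ => m ≤ (univ.filter (fun ℓ => P (σ ℓ))).card))
      ⊆ (Finset.powersetCard m (univ : Finset (Fin v))).biUnion
          (fun S => Fintype.piFinset (fun ℓ => if ℓ ∈ S then A else univ)) := by
    intro σ hσ
    rw [mem_filter] at hσ
    obtain ⟨S, hSsub, hScard⟩ := Finset.exists_subset_card_eq hσ.2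
    rw [mem_biUnion]
    refine ⟨S, Finset.mem_powersetCard.mpr ⟨subset_univ _, hScard⟩, ?_⟩
    rw [Fintype.mem_piFinset]
    intro ℓ
    by_cases h : ℓ ∈ S
    · simp only [h, if_true, hA, mem_filter, mem_univ, true_and]
      have := hSsub h
      rw [mem_filter] at this
      exact this.2
    · simp [h]
  calc ((univ : Finset (Fin v → Ω)).filter
        (fun σ => m ≤ (univ.filter (fun ℓ => P (σ ℓ))).card)).card
      ≤ ∑ S ∈ Finset.powersetCard m (univ : Finset (Fin v)),
          (Fintype.piFinset (fun ℓ => if ℓ ∈ S then A else univ)).card :=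
        le_trans (Finset.card_le_card hsub) (Finset.card_biUnion_le)
    _ = ∑ S ∈ Finset.powersetCard m (univ : Finset (Fin v)),
          A.card ^ m * (Fintype.card Ω) ^ (v - m) := by
        apply Finset.sum_congr rfl
        intro S hS
        rw [Finset.mem_powersetCard] at hS
        rw [Fintype.card_piFinset]
        rw [← Finset.prod_filter_mul_prod_filter_not univ (· ∈ S)]
        have h1 : (univ.filter (· ∈ S)) = S := by
          ext x; simp
        have h2 : ∀ x ∈ univ.filter (¬ · ∈ S), ((if x ∈ S then A else univ).card) = Fintype.card Ω := by
          intro x hx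
          rw [mem_filter] at hx
          rw [if_neg hx.2, card_univ]
        have h3 : ∀ x ∈ S, ((if x ∈ S then A else univ).card) = A.card := by
          intro x hx
          rw [if_pos hx]
        rw [h1]
        rw [Finset.prod_congr rfl h3, Finset.prod_congr rfl h2,
          Finset.prod_const, Finset.prod_const, hS.2]
        congr 1
        rw [Finset.filter_not, h1]
        rw [Finset.card_sdiff_of_subset (subset_univ _), card_univ, Fintype.card_fin, hS.2]
    _ = v.choose m * (A.card ^ m * (Fintype.card Ω) ^ (v - m)) := by
        rw [sum_const, smul_eq_mul, Finset.card_powersetCard, card_univ, Fintype.card_fin]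
    _ = v.choose m * A.card ^ m * (Fintype.card Ω) ^ (v - m) := by ring

/-- For `H` drawn from the distribution `D_{r,n,v,w}` (stack of `v`
independently and uniformly column-permuted copies of `I_{n'} ⊗ 1_w`, `n = n'·w`)
with `α√n ≤ v < w ≤ β√n`, the probability that the maximum column intersection of
`H` exceeds `(2+ε)·ln n / ln ln n` tends to `0` as `n → ∞`. -/
theorem mdpc_max_intersection_small
    (α β : ℝ) (hα : 0 < α) (hαβ : α < β) (ε : ℝ) (hε : 0 < ε) :
    ∀ δ : ℝ, 0 < δ → ∃ N : ℕ, ∀ n n' w v : ℕ, N ≤ n → n = n' * w →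
      α * Real.sqrt n ≤ (v : ℝ) → v < w → (w : ℝ) ≤ β * Real.sqrt n →
      ((Finset.univ.filter (fun σ : Fin v → Equiv.Perm (Fin n) =>
          ∃ j j' : Fin n, j ≠ j' ∧
            (2 + ε) * Real.log n / Real.log (Real.log n) <
              ((Finset.univ.filter (fun ℓ : Fin v =>
                ((σ ℓ j : ℕ)) / w = ((σ ℓ j' : ℕ)) / w)).card : ℝ))).card : ℝ)
        / (Fintype.card (Fin v → Equiv.Perm (Fin n))) < δ := by
  intro δ hδ
  have hβ : 0 < β := lt_trans hα hαβ
  have hB : (0:ℝ) < 6 * β^2 := by positivity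
  have T0 : Tendsto (fun n : ℕ => (n:ℝ)) atTop atTop := tendsto_natCast_atTop_atTop
  have T1 : Tendsto (fun n : ℕ => Real.log n) atTop atTop :=
    Real.tendsto_log_atTop.comp T0
  have T2 : Tendsto (fun n : ℕ => Real.log (Real.log n)) atTop atTop :=
    Real.tendsto_log_atTop.comp T1
  have hev : ∀ᶠ n : ℕ in atTop,
      (2 ≤ n) ∧ ((1/α)^2 ≤ (n:ℝ)) ∧ (1 ≤ Real.log (Real.log n)) ∧
      (∀ m : ℕ, (2+ε) * Real.log n / Real.log (Real.log n) ≤ m →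
        (n:ℝ)^2 * ((6*β^2) / m)^m < δ) := by
    filter_upwards [eventually_ge_atTop 2, T0.eventually_ge_atTop ((1/α)^2),
      T2.eventually_ge_atTop 1, key_asymp (6*β^2) ε δ hB hε hδ] with n h1 h2 h3 h4
    exact ⟨h1, h2, h3, h4⟩
  obtain ⟨N, hN⟩ := eventually_atTop.mp hev
  refine ⟨N, fun n n' w v hn hnw hαv hvw hwβ => ?_⟩
  obtain ⟨hn2, hsq, hLL1, hkey⟩ := hN n hn
  -- basic positivity
  have hn0 : 0 < n := by omega
  have hnR : (0:ℝ) < n := by exact_mod_cast hn0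
  have hsqrtn : (0:ℝ) < Real.sqrt n := Real.sqrt_pos.mpr hnR
  have hv1 : 1 ≤ v := by
    rcases Nat.eq_zero_or_pos v with h | h
    · exfalso
      rw [h] at hαv
      push_cast at hαv
      nlinarith [mul_pos hα hsqrtn]
    · exact h
  have hw0 : 0 < w := by omega
  have hw1R : (1:ℝ) ≤ w := by exact_mod_cast hw0
  -- the count and sets
  set t : ℝ := (2 + ε) * Real.log n / Real.log (Real.log n) with htdef
  set m : ℕ := ⌈t⌉₊ with hmdef
  have hL1 : (0:ℝ) < Real.log n := by
    rcases (Real.log_natCast_nonneg n).eq_or_lt with h | h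
    · exfalso; rw [← h, Real.log_zero] at hLL1; linarith
    · exact h
  have hLL0 : (0:ℝ) < Real.log (Real.log n) := by linarith
  have ht0 : 0 < t := by rw [htdef]; positivity
  have hm1 : 1 ≤ m := by
    rw [hmdef]
    exact Nat.one_le_iff_ne_zero.mpr (by
      intro h
      rw [Nat.ceil_eq_zero] at h
      linarith)
  have hmR : (0:ℝ) < m := by exact_mod_cast hm1
  have htm : t ≤ (m:ℝ) := Nat.le_ceil t
  set E := (Finset.univ.filter (fun σ : Fin v → Equiv.Perm (Fin n) =>
          ∃ j j' : Fin n, j ≠ j' ∧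
            (2 + ε) * Real.log n / Real.log (Real.log n) <
              ((Finset.univ.filter (fun ℓ : Fin v =>
                ((σ ℓ j : ℕ)) / w = ((σ ℓ j' : ℕ)) / w)).card : ℝ))) with hEdef
  have hEsub : E ⊆ ((univ : Finset (Fin n)).offDiag).biUnion
      (fun p => (univ : Finset (Fin v → Equiv.Perm (Fin n))).filter
        (fun σ => m ≤ (univ.filter (fun ℓ =>
          ((σ ℓ p.1 : ℕ)) / w = ((σ ℓ p.2 : ℕ)) / w)).card)) := by
    intro σ hσ
    rw [hEdef, mem_filter] at hσ
    obtain ⟨-, j, j', hjj, hcnt⟩ := hσ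
    rw [mem_biUnion]
    refine ⟨(j, j'), mem_offDiag.mpr ⟨mem_univ _, mem_univ _, hjj⟩, ?_⟩
    rw [mem_filter]
    exact ⟨mem_univ _, Nat.ceil_le.mpr hcnt.le⟩
  -- degenerate case m > v
  by_cases hmv : m ≤ v
  case neg =>
    have hE0 : E.card = 0 := by
      rw [Finset.card_eq_zero]
      rw [Finset.eq_empty_iff_forall_notMem]
      intro σ hσ
      have := hEsub hσ
      rw [mem_biUnion] at this
      obtain ⟨p, -, hp⟩ := this
      rw [mem_filter] at hp
      have hle : (univ.filter (fun ℓ =>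
          ((σ ℓ p.1 : ℕ)) / w = ((σ ℓ p.2 : ℕ)) / w)).card ≤ v := by
        refine le_trans (Finset.card_filter_le _ _) ?_
        rw [card_univ, Fintype.card_fin]
      omega
    rw [hE0]
    simp only [Nat.cast_zero]
    rw [zero_div]
    exact hδ
  case pos =>
  set T : ℝ := (n.factorial : ℝ) with hTdef
  have hT : (0:ℝ) < T := by
    rw [hTdef]; exact_mod_cast n.factorial_pos
  have hn2R : (2:ℝ) ≤ n := by exact_mod_cast hn2
  set q : ℝ := ((w:ℝ) - 1)/((n:ℝ) - 1) with hqdef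
  have hq0 : 0 ≤ q := by
    apply div_nonneg <;> linarith
  have hcardPerm : Fintype.card (Equiv.Perm (Fin n)) = n.factorial := by
    rw [Fintype.card_perm, Fintype.card_fin]
  -- bound on each pair probability
  have hqbound : ∀ p : Fin n × Fin n, p ∈ (univ : Finset (Fin n)).offDiag →
      ((univ.filter (fun π : Equiv.Perm (Fin n) =>
        ((π p.1 : ℕ))/w = ((π p.2 : ℕ))/w)).card : ℝ) ≤ q * T := by
    intro p hp
    have hne := (mem_offDiag.mp hp).2.2
    have h1 := perm_pair_count hw0 p.1 p.2 hne
    have h2 : (((univ.filter (fun π : Equiv.Perm (Fin n) =>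
        ((π p.1 : ℕ))/w = ((π p.2 : ℕ))/w)).card : ℝ)) * ((n:ℝ)*(n:ℝ) - (n:ℝ))
        ≤ ((n:ℝ) * ((w:ℝ)-1)) * T := by
      have hc1 : ((n*n - n : ℕ) : ℝ) = (n:ℝ)*(n:ℝ) - (n:ℝ) := by
        rw [Nat.cast_sub (Nat.le_mul_of_pos_left n hn0)]
        push_cast; ring
      have hc2 : ((w - 1 : ℕ) : ℝ) = (w:ℝ) - 1 := by
        rw [Nat.cast_sub hw0]
        push_cast; ring
      calc ((univ.filter (fun π : Equiv.Perm (Fin n) =>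
            ((π p.1 : ℕ))/w = ((π p.2 : ℕ))/w)).card : ℝ) * ((n:ℝ)*(n:ℝ) - (n:ℝ))
          = (((univ.filter (fun π : Equiv.Perm (Fin n) =>
            ((π p.1 : ℕ))/w = ((π p.2 : ℕ))/w)).card * (n*n - n) : ℕ) : ℝ) := by
            rw [Nat.cast_mul, hc1]
        _ ≤ (((n * (w-1)) * n.factorial : ℕ) : ℝ) := by exact_mod_cast h1
        _ = ((n:ℝ) * ((w:ℝ)-1)) * T := by
            rw [Nat.cast_mul, Nat.cast_mul, hc2, hTdef]
    rw [hqdef]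
    rw [div_mul_eq_mul_div, le_div_iff₀ (by linarith : (0:ℝ) < (n:ℝ) - 1)]
    have hTn : (0:ℝ) ≤ T := hT.le
    nlinarith [show (0:ℝ) ≤ ((univ.filter (fun π : Equiv.Perm (Fin n) =>
        ((π p.1 : ℕ))/w = ((π p.2 : ℕ))/w)).card : ℝ) from Nat.cast_nonneg _]
  -- per-pair product bound
  have hstep : ∀ p : Fin n × Fin n, p ∈ (univ : Finset (Fin n)).offDiag →
      (((univ : Finset (Fin v → Equiv.Perm (Fin n))).filter
        (fun σ => m ≤ (univ.filter (fun ℓ =>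
          ((σ ℓ p.1 : ℕ)) / w = ((σ ℓ p.2 : ℕ)) / w)).card)).card : ℝ)
        ≤ (v.choose m : ℝ) * (q*T)^m * T^(v-m) := by
    intro p hp
    have h1 := prod_count (v := v) (Ω := Equiv.Perm (Fin n))
      (fun π => ((π p.1 : ℕ))/w = ((π p.2 : ℕ))/w) m
    rw [hcardPerm] at h1
    have h2 : (((univ : Finset (Fin v → Equiv.Perm (Fin n))).filter
        (fun σ => m ≤ (univ.filter (fun ℓ =>
          ((σ ℓ p.1 : ℕ)) / w = ((σ ℓ p.2 : ℕ)) / w)).card)).card : ℝ)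
        ≤ (v.choose m : ℝ) * ((univ.filter (fun π : Equiv.Perm (Fin n) =>
          ((π p.1 : ℕ))/w = ((π p.2 : ℕ))/w)).card : ℝ) ^ m * T^(v-m) := by
      rw [hTdef]
      exact_mod_cast h1
    refine h2.trans ?_
    have h3 : ((univ.filter (fun π : Equiv.Perm (Fin n) =>
          ((π p.1 : ℕ))/w = ((π p.2 : ℕ))/w)).card : ℝ) ^ m ≤ (q*T)^m :=
      pow_le_pow_left₀ (Nat.cast_nonneg _) (hqbound p hp) m
    exact mul_le_mul_of_nonneg_right
      (mul_le_mul_of_nonneg_left h3 (Nat.cast_nonneg _)) (by positivity)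
  -- assemble
  have hoffR : (((univ : Finset (Fin n)).offDiag).card : ℝ) ≤ (n:ℝ)^2 := by
    rw [Finset.offDiag_card, card_univ, Fintype.card_fin]
    calc ((n*n - n : ℕ) : ℝ) ≤ ((n*n : ℕ) : ℝ) := by
          exact_mod_cast Nat.sub_le _ _
      _ = (n:ℝ)^2 := by push_cast; ring
  have hE1 : (E.card : ℝ) ≤ (n:ℝ)^2 * ((v.choose m : ℝ) * (q*T)^m * T^(v-m)) := by
    have h1 : E.card ≤ ∑ p ∈ (univ : Finset (Fin n)).offDiag,
        (((univ : Finset (Fin v → Equiv.Perm (Fin n))).filter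
          (fun σ => m ≤ (univ.filter (fun ℓ =>
            ((σ ℓ p.1 : ℕ)) / w = ((σ ℓ p.2 : ℕ)) / w)).card)).card) :=
      (Finset.card_le_card hEsub).trans Finset.card_biUnion_le
    calc (E.card : ℝ) ≤ ∑ p ∈ (univ : Finset (Fin n)).offDiag,
          ((((univ : Finset (Fin v → Equiv.Perm (Fin n))).filter
            (fun σ => m ≤ (univ.filter (fun ℓ =>
              ((σ ℓ p.1 : ℕ)) / w = ((σ ℓ p.2 : ℕ)) / w)).card)).card) : ℝ) := by
          exact_mod_cast h1
      _ ≤ ∑ _p ∈ (univ : Finset (Fin n)).offDiag,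
            ((v.choose m : ℝ) * (q*T)^m * T^(v-m)) :=
          Finset.sum_le_sum hstep
      _ = (((univ : Finset (Fin n)).offDiag).card : ℝ)
            * ((v.choose m : ℝ) * (q*T)^m * T^(v-m)) := by
          rw [sum_const, nsmul_eq_mul]
      _ ≤ (n:ℝ)^2 * ((v.choose m : ℝ) * (q*T)^m * T^(v-m)) := by
          apply mul_le_mul_of_nonneg_right hoffR (by positivity)
  -- the scalar bound
  have hvq : (v:ℝ) * q ≤ 2*β^2 := by
    have hsq : Real.sqrt n * Real.sqrt n = (n:ℝ) := Real.mul_self_sqrt hnR.le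
    have hvR : (v:ℝ) ≤ β * Real.sqrt n := by
      have : (v:ℝ) < (w:ℝ) := by exact_mod_cast hvw
      linarith
    have hq2 : q ≤ 2*β / Real.sqrt n := by
      rw [hqdef, div_le_div_iff₀ (by linarith : (0:ℝ) < (n:ℝ)-1) hsqrtn]
      calc ((w:ℝ)-1) * Real.sqrt n ≤ (w:ℝ) * Real.sqrt n :=
            mul_le_mul_of_nonneg_right (by linarith) hsqrtn.le
        _ ≤ (β * Real.sqrt n) * Real.sqrt n :=
            mul_le_mul_of_nonneg_right hwβ hsqrtn.le
        _ = β * (n:ℝ) := by rw [mul_assoc, hsq]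
        _ ≤ 2*β*((n:ℝ)-1) := by
            have h7 : 0 ≤ β*((n:ℝ)-2) := mul_nonneg hβ.le (by linarith)
            linarith
    have h2b : (0:ℝ) ≤ 2*β / Real.sqrt n := by positivity
    calc (v:ℝ) * q ≤ (β * Real.sqrt n) * (2*β / Real.sqrt n) := by
          apply mul_le_mul hvR hq2 hq0 (by positivity)
      _ = 2*β^2 := by
          field_simp
  have hfinal : (n:ℝ)^2 * (v.choose m : ℝ) * q^m < δ := by
    have c1 : (v.choose m : ℝ) ≤ (v:ℝ)^m / m.factorial := Nat.choose_le_pow_div m v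
    have c2 : (1:ℝ) / m.factorial ≤ (3/(m:ℝ))^m := by
      have h1 := fact_ge m
      have h2 : (0:ℝ) < ((m:ℝ)/3)^m := by positivity
      rw [div_le_iff₀ (by positivity : (0:ℝ) < (m.factorial : ℝ))]
      rw [show (3/(m:ℝ))^m = (((m:ℝ)/3)^m)⁻¹ by
        rw [← inv_pow]; congr 1; rw [inv_div]]
      rw [inv_mul_eq_div, le_div_iff₀ h2]
      linarith
    have c3 : ((v:ℝ)*q)^m ≤ (2*β^2)^m :=
      pow_le_pow_left₀ (by positivity) hvq m
    calc (n:ℝ)^2 * (v.choose m : ℝ) * q^m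
        ≤ (n:ℝ)^2 * ((v:ℝ)^m / m.factorial) * q^m :=
          mul_le_mul_of_nonneg_right
            (mul_le_mul_of_nonneg_left c1 (by positivity)) (by positivity)
      _ = (n:ℝ)^2 * (((v:ℝ)*q)^m * ((1:ℝ)/m.factorial)) := by
          rw [mul_pow]; ring
      _ ≤ (n:ℝ)^2 * ((2*β^2)^m * (3/(m:ℝ))^m) := by
          apply mul_le_mul_of_nonneg_left _ (by positivity)
          exact mul_le_mul c3 c2 (by positivity) (by positivity)
      _ = (n:ℝ)^2 * ((6*β^2)/(m:ℝ))^m := by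
          rw [← mul_pow]
          congr 2
          rw [← mul_div_assoc]
          ring
      _ < δ := hkey m htm
  -- finish
  have htot : ((Fintype.card (Fin v → Equiv.Perm (Fin n))) : ℝ) = T^v := by
    rw [Fintype.card_fun, hcardPerm, Fintype.card_fin, hTdef]
    push_cast
    ring
  rw [htot, div_lt_iff₀ (by positivity : (0:ℝ) < T^v)]
  have hTv : T^m * T^(v-m) = T^v := by
    rw [← pow_add, Nat.add_sub_cancel' hmv]
  calc (E.card : ℝ) ≤ (n:ℝ)^2 * ((v.choose m : ℝ) * (q*T)^m * T^(v-m)) := hE1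
    _ = ((n:ℝ)^2 * (v.choose m : ℝ) * q^m) * (T^m * T^(v-m)) := by
        rw [mul_pow]; ring
    _ = ((n:ℝ)^2 * (v.choose m : ℝ) * q^m) * T^v := by rw [hTv]
    _ < δ * T^v := by
        apply mul_lt_mul_of_pos_right hfinal (by positivity)
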